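/- Define fA (x₁, x₂) = (−x₁/8 − x₂, 2x₁ − x₂/8) and fB (x₁, x₂) = (−x₁/8 − 2x₂, x₁ − x₂/8) on ℝ × ℝ, with domains QA = {(x₁, x₂) : x₁·x₂ ≤ 0} for fA and QB = {(x₁, x₂) : x₁·x₂ ≥ 0} for fB. The origin is stable for the state-dependent switched system: for every ε > 0 there exists δ > 0 such that for every ω with ‖ω‖ < δ and every ν reachable from ω in the reflexive-transitive closure of the union of the fA-flow relation with domain QA and the fB-flow relation with domain QB, ‖ν‖ < ε. -/

import Mathlib

/-- The vector field `fA (x₁, x₂) = (−x₁/8 − x₂, 2x₁ − x₂/8)`. -/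
noncomputable def fA (x : ℝ × ℝ) : ℝ × ℝ := (-x.1 / 8 - x.2, 2 * x.1 - x.2 / 8)

/-- The vector field `fB (x₁, x₂) = (−x₁/8 − 2x₂, x₁ − x₂/8)`. -/
noncomputable def fB (x : ℝ × ℝ) : ℝ × ℝ := (-x.1 / 8 - 2 * x.2, x.1 - x.2 / 8)

/-- Domain for `fA`: `x₁·x₂ ≤ 0`. -/
def QA : Set (ℝ × ℝ) := {x : ℝ × ℝ | x.1 * x.2 ≤ 0}

/-- Domain for `fB`: `x₁·x₂ ≥ 0`. -/
def QB : Set (ℝ × ℝ) := {x : ℝ × ℝ | x.1 * x.2 ≥ 0}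

/-- The flow relation for a vector field `g` on `ℝ × ℝ` with domain `Q`. -/
def FlowRel (g : ℝ × ℝ → ℝ × ℝ) (Q : Set (ℝ × ℝ)) (ω ν : ℝ × ℝ) : Prop :=
  ∃ t : ℝ, 0 ≤ t ∧ ∃ φ : ℝ → ℝ × ℝ, φ 0 = ω ∧ φ t = ν ∧
    ∀ s ∈ Set.Icc (0 : ℝ) t, HasDerivWithinAt φ (g (φ s)) (Set.Icc (0 : ℝ) t) s ∧ φ s ∈ Q

/-- The Euclidean norm on `ℝ × ℝ`. -/
noncomputable def enorm2 (x : ℝ × ℝ) : ℝ := Real.sqrt (x.1 ^ 2 + x.2 ^ 2)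

noncomputable def Wfn (x : ℝ × ℝ) : ℝ := x.1 ^ 2 + x.2 ^ 2 + |x.1 * x.2| / 4

lemma comp_fst {φ : ℝ → ℝ × ℝ} {d : ℝ × ℝ} {S : Set ℝ} {s : ℝ}
    (H : HasDerivWithinAt φ d S s) :
    HasDerivWithinAt (fun r => (φ r).1) d.1 S s := by
  have := (hasFDerivAt_fst (𝕜 := ℝ) (p := φ s)).comp_hasDerivWithinAt s H
  exact this

lemma comp_snd {φ : ℝ → ℝ × ℝ} {d : ℝ × ℝ} {S : Set ℝ} {s : ℝ}
    (H : HasDerivWithinAt φ d S s) :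
    HasDerivWithinAt (fun r => (φ r).2) d.2 S s := by
  have := (hasFDerivAt_snd (𝕜 := ℝ) (p := φ s)).comp_hasDerivWithinAt s H
  exact this

lemma flowA_W {ω ν : ℝ × ℝ} (h : FlowRel fA QA ω ν) : Wfn ν ≤ Wfn ω := by
  obtain ⟨t, ht, φ, h0, htν, hφ⟩ := h
  have h0mem : (0:ℝ) ∈ Set.Icc (0:ℝ) t := ⟨le_refl _, ht⟩
  have htmem : t ∈ Set.Icc (0:ℝ) t := ⟨ht, le_refl _⟩
  set g : ℝ → ℝ := fun r => (φ r).1 ^ 2 + (φ r).2 ^ 2 - (φ r).1 * (φ r).2 / 4 with hg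
  have key : ∀ s ∈ Set.Icc (0:ℝ) t, HasDerivWithinAt g
      (((2:ℕ):ℝ) * (φ s).1 ^ 1 * (fA (φ s)).1 + ((2:ℕ):ℝ) * (φ s).2 ^ 1 * (fA (φ s)).2
        - ((fA (φ s)).1 * (φ s).2 + (φ s).1 * (fA (φ s)).2) / 4) (Set.Icc 0 t) s := by
    intro s hs
    have H := (hφ s hs).1
    have H1 := comp_fst H
    have H2 := comp_snd H
    exact ((H1.pow 2).add (H2.pow 2)).sub ((H1.mul H2).div_const 4)
  have cont : ContinuousOn g (Set.Icc 0 t) := fun s hs => (key s hs).continuousWithinAt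
  have diff : ∀ s ∈ Set.Ioo (0:ℝ) t, HasDerivAt g
      (((2:ℕ):ℝ) * (φ s).1 ^ 1 * (fA (φ s)).1 + ((2:ℕ):ℝ) * (φ s).2 ^ 1 * (fA (φ s)).2
        - ((fA (φ s)).1 * (φ s).2 + (φ s).1 * (fA (φ s)).2) / 4) s := fun s hs =>
    (key s ⟨hs.1.le, hs.2.le⟩).hasDerivAt (Icc_mem_nhds hs.1 hs.2)
  have anti : AntitoneOn g (Set.Icc 0 t) := by
    apply antitoneOn_of_deriv_nonpos (convex_Icc (0:ℝ) t) cont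
    · rw [interior_Icc]
      exact fun s hs => ((diff s hs).differentiableAt).differentiableWithinAt
    · rw [interior_Icc]
      intro s hs
      rw [(diff s hs).deriv]
      have hq : (φ s).1 * (φ s).2 ≤ 0 := (hφ s ⟨hs.1.le, hs.2.le⟩).2
      simp only [fA]
      nlinarith [sq_nonneg (φ s).1, sq_nonneg (φ s).2]
  have hgt : g t ≤ g 0 := anti h0mem htmem ht
  have hω : ω.1 * ω.2 ≤ 0 := by have := (hφ 0 h0mem).2; rwa [h0] at this
  have hν : ν.1 * ν.2 ≤ 0 := by have := (hφ t htmem).2; rwa [htν] at this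
  have e1 : Wfn ν = ν.1 ^ 2 + ν.2 ^ 2 - ν.1 * ν.2 / 4 := by
    rw [Wfn, abs_of_nonpos hν]; ring
  have e2 : Wfn ω = ω.1 ^ 2 + ω.2 ^ 2 - ω.1 * ω.2 / 4 := by
    rw [Wfn, abs_of_nonpos hω]; ring
  rw [e1, e2, ← h0, ← htν]
  exact hgt

lemma flowB_W {ω ν : ℝ × ℝ} (h : FlowRel fB QB ω ν) : Wfn ν ≤ Wfn ω := by
  obtain ⟨t, ht, φ, h0, htν, hφ⟩ := h
  have h0mem : (0:ℝ) ∈ Set.Icc (0:ℝ) t := ⟨le_refl _, ht⟩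
  have htmem : t ∈ Set.Icc (0:ℝ) t := ⟨ht, le_refl _⟩
  set g : ℝ → ℝ := fun r => (φ r).1 ^ 2 + (φ r).2 ^ 2 + (φ r).1 * (φ r).2 / 4 with hg
  have key : ∀ s ∈ Set.Icc (0:ℝ) t, HasDerivWithinAt g
      (((2:ℕ):ℝ) * (φ s).1 ^ 1 * (fB (φ s)).1 + ((2:ℕ):ℝ) * (φ s).2 ^ 1 * (fB (φ s)).2
        + ((fB (φ s)).1 * (φ s).2 + (φ s).1 * (fB (φ s)).2) / 4) (Set.Icc 0 t) s := by
    intro s hs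
    have H := (hφ s hs).1
    have H1 := comp_fst H
    have H2 := comp_snd H
    exact ((H1.pow 2).add (H2.pow 2)).add ((H1.mul H2).div_const 4)
  have cont : ContinuousOn g (Set.Icc 0 t) := fun s hs => (key s hs).continuousWithinAt
  have diff : ∀ s ∈ Set.Ioo (0:ℝ) t, HasDerivAt g
      (((2:ℕ):ℝ) * (φ s).1 ^ 1 * (fB (φ s)).1 + ((2:ℕ):ℝ) * (φ s).2 ^ 1 * (fB (φ s)).2
        + ((fB (φ s)).1 * (φ s).2 + (φ s).1 * (fB (φ s)).2) / 4) s := fun s hs =>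
    (key s ⟨hs.1.le, hs.2.le⟩).hasDerivAt (Icc_mem_nhds hs.1 hs.2)
  have anti : AntitoneOn g (Set.Icc 0 t) := by
    apply antitoneOn_of_deriv_nonpos (convex_Icc (0:ℝ) t) cont
    · rw [interior_Icc]
      exact fun s hs => ((diff s hs).differentiableAt).differentiableWithinAt
    · rw [interior_Icc]
      intro s hs
      rw [(diff s hs).deriv]
      have hq : (φ s).1 * (φ s).2 ≥ 0 := (hφ s ⟨hs.1.le, hs.2.le⟩).2
      simp only [fB]
      nlinarith [sq_nonneg (φ s).1, sq_nonneg (φ s).2]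
  have hgt : g t ≤ g 0 := anti h0mem htmem ht
  have hω : ω.1 * ω.2 ≥ 0 := by have := (hφ 0 h0mem).2; rwa [h0] at this
  have hν : ν.1 * ν.2 ≥ 0 := by have := (hφ t htmem).2; rwa [htν] at this
  have e1 : Wfn ν = ν.1 ^ 2 + ν.2 ^ 2 + ν.1 * ν.2 / 4 := by
    rw [Wfn, abs_of_nonneg hν]
  have e2 : Wfn ω = ω.1 ^ 2 + ω.2 ^ 2 + ω.1 * ω.2 / 4 := by
    rw [Wfn, abs_of_nonneg hω]
  rw [e1, e2, ← h0, ← htν]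
  exact hgt

theorem origin_stable_state_dependent_switching :
    ∀ ε : ℝ, 0 < ε → ∃ δ : ℝ, 0 < δ ∧
      ∀ ω : ℝ × ℝ, enorm2 ω < δ →
        ∀ ν : ℝ × ℝ,
          Relation.ReflTransGen (fun a b => FlowRel fA QA a b ∨ FlowRel fB QB a b) ω ν →
          enorm2 ν < ε := by
  intro ε hε
  refine ⟨ε / 2, by positivity, ?_⟩
  intro ω hω ν hrel
  have chain : Wfn ν ≤ Wfn ω := by
    induction hrel with
    | refl => exact le_refl _
    | tail _ hr ih =>
      rcases hr with hr | hr
      · exact le_trans (flowA_W hr) ih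
      · exact le_trans (flowB_W hr) ih
  have hω2 : ω.1 ^ 2 + ω.2 ^ 2 < (ε / 2) ^ 2 :=
    (Real.sqrt_lt' (by positivity)).1 hω
  have habs : |ω.1 * ω.2| ≤ (ω.1 ^ 2 + ω.2 ^ 2) / 2 := by
    rw [abs_le]
    constructor <;> nlinarith [sq_nonneg (ω.1 + ω.2), sq_nonneg (ω.1 - ω.2)]
  have hWω : Wfn ω ≤ 9 / 8 * (ω.1 ^ 2 + ω.2 ^ 2) := by
    rw [Wfn]; linarith
  have hWν : ν.1 ^ 2 + ν.2 ^ 2 ≤ Wfn ν := by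
    rw [Wfn]
    have := abs_nonneg (ν.1 * ν.2)
    linarith
  have hfin : ν.1 ^ 2 + ν.2 ^ 2 < ε ^ 2 := by nlinarith
  rw [enorm2, show ε = Real.sqrt (ε ^ 2) by rw [Real.sqrt_sq hε.le]]
  exact Real.sqrt_lt_sqrt (by positivity) hfin
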